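/- If F : Ω → 𝒫(ℝ^d) is an ℋ-measurable set-valued map with nonempty convex values whose graph lies in ℋ ⊗ ℬ(ℝ^d), then the set-valued map ω ↦ ri(F(ω)) (relative interior) also has graph in ℋ ⊗ ℬ(ℝ^d) and admits ℋ-measurable selectors. -/

import Mathlib

open MeasureTheory

open Set Filter
open scoped Classical

section PartA
variable {V : Type*} [NormedAddCommGroup V] [NormedSpace ℝ V]

/-- interior of closure of a convex set with nonempty interior. -/
lemma convex_interior_closure {s : Set V} (hs : Convex ℝ s) (hne : (interior s).Nonempty) :
    interior (closure s) = interior s := by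
  refine Subset.antisymm ?_ (interior_mono subset_closure)
  obtain ⟨z, hz⟩ := hne
  intro y hy
  have hcont : Continuous fun t : ℝ => y + t • (y - z) := by continuity
  have h0 : (fun t : ℝ => y + t • (y - z)) 0 ∈ interior (closure s) := by simpa using hy
  have hnhds : (fun t : ℝ => y + t • (y - z)) ⁻¹' interior (closure s) ∈ nhds (0 : ℝ) :=
    (isOpen_interior.preimage hcont).mem_nhds h0
  obtain ⟨ε, hε, hball⟩ := Metric.mem_nhds_iff.1 hnhds
  set t := ε / 2 with ht
  have htpos : 0 < t := by positivity
  have hw : y + t • (y - z) ∈ closure s := by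
    have : t ∈ Metric.ball (0 : ℝ) ε := by
      rw [Metric.mem_ball, Real.dist_eq, sub_zero, abs_of_pos htpos, ht]
      linarith
    exact interior_subset (hball this)
  have hcombo := hs.combo_interior_closure_mem_interior hz hw
    (a := t / (1 + t)) (b := 1 / (1 + t)) (by positivity) (by positivity)
    (by field_simp; ring)
  have heq : (t / (1 + t)) • z + (1 / (1 + t)) • (y + t • (y - z)) = y := by
    have h1t : (1 + t) ≠ 0 := by positivity
    match_scalars <;> field_simp <;> ring
  rwa [heq] at hcombo

lemma intrinsicInterior_eq_interior_of_span_top {s : Set V} (h : affineSpan ℝ s = ⊤) :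
    intrinsicInterior ℝ s = interior s := by
  refine Subset.antisymm ?_ interior_subset_intrinsicInterior
  rintro x ⟨y, hy, rfl⟩
  have hopen : IsOpen ((affineSpan ℝ s : Set V)) := by
    rw [h]; simp
  have hmap := hopen.isOpenEmbedding_subtypeVal.isOpenMap
  have h1 : Subtype.val '' interior (Subtype.val ⁻¹' s) ⊆
      interior (Subtype.val '' (Subtype.val ⁻¹' s : Set (affineSpan ℝ s))) :=
    hmap.image_interior_subset _
  exact interior_mono (image_preimage_subset _ _) (h1 ⟨y, hy, rfl⟩)

end PartA


section PartB
variable {E : Type*} [NormedAddCommGroup E] [NormedSpace ℝ E] [FiniteDimensional ℝ E]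

lemma ri_setup {C : Set E} (hC : Convex ℝ C) (hne : C.Nonempty) :
    ∃ (ψ : ((affineSpan ℝ C).direction) →ᵃⁱ[ℝ] E) (C₀ : Set ((affineSpan ℝ C).direction)),
      Convex ℝ C₀ ∧ (interior C₀).Nonempty ∧ ψ '' C₀ = C ∧
      ψ '' interior C₀ = intrinsicInterior ℝ C ∧ ψ '' closure C₀ = closure C ∧
      interior (closure C₀) = interior C₀ := by
  obtain ⟨p₀, hp₀⟩ := hne
  haveI : Nonempty (affineSpan ℝ C) := ⟨⟨p₀, subset_affineSpan ℝ C hp₀⟩⟩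
  set S := affineSpan ℝ C with hS
  let e := AffineIsometryEquiv.constVSub ℝ (⟨p₀, subset_affineSpan ℝ C hp₀⟩ : S)
  let ψ : S.direction →ᵃⁱ[ℝ] E := S.subtypeₐᵢ.comp e.symm.toAffineIsometry
  have hrange : Set.range ψ = (S : Set E) := by
    have : Set.range ψ = Subtype.val '' (Set.range e.symm) := by
      rw [← Set.range_comp]; rfl
    rw [this, e.symm.surjective.range_eq, Set.image_univ, Subtype.range_coe]
  have hCsub : C ⊆ Set.range ψ := by rw [hrange]; exact subset_affineSpan ℝ C
  have hSclosed : IsClosed (S : Set E) := S.closed_of_finiteDimensional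
  have hclsub : closure C ⊆ Set.range ψ := by
    rw [hrange]; exact closure_minimal (subset_affineSpan ℝ C) hSclosed
  set C₀ := ψ ⁻¹' C with hC₀
  have himg : ψ '' C₀ = C := Set.image_preimage_eq_of_subset hCsub
  have hinj : Function.Injective ψ := ψ.injective
  have hconv₀ : Convex ℝ C₀ := hC.affine_preimage ψ.toAffineMap
  have hclemb : Topology.IsClosedEmbedding ψ := ψ.isometry.isClosedEmbedding
  have hclim : ψ '' closure C₀ = closure C := by
    rw [← hclemb.closure_image_eq, himg]
  have hspan : affineSpan ℝ C₀ = ⊤ := by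
    have h1 : (affineSpan ℝ C₀).map ψ.toAffineMap = S := by
      rw [AffineSubspace.map_span]
      rw [show ⇑ψ.toAffineMap '' C₀ = ⇑ψ '' C₀ from rfl, himg]
    rw [eq_top_iff]
    intro v _
    have hv : ψ v ∈ (AffineSubspace.map ψ.toAffineMap (affineSpan ℝ C₀) : Set E) := by
      rw [h1, ← hrange]; exact Set.mem_range_self v
    rw [AffineSubspace.coe_map] at hv
    obtain ⟨w, hw, hwv⟩ := hv
    rwa [← hinj hwv]
  have hint_ne : (interior C₀).Nonempty :=
    (hconv₀.interior_nonempty_iff_affineSpan_eq_top).2 hspan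
  have hic : interior (closure C₀) = interior C₀ := convex_interior_closure hconv₀ hint_ne
  have hri : ψ '' interior C₀ = intrinsicInterior ℝ C := by
    rw [← himg, AffineIsometry.image_intrinsicInterior,
      intrinsicInterior_eq_interior_of_span_top hspan]
  exact ⟨ψ, C₀, hconv₀, hint_ne, himg, hri, hclim, hic⟩

/-- affine maps commute with the combination `a + q • (a - b)`. -/
lemma affine_key {V W : Type*} [NormedAddCommGroup V] [NormedSpace ℝ V]
    [NormedAddCommGroup W] [NormedSpace ℝ W] (ψ : V →ᵃⁱ[ℝ] W) (a b : V) (q : ℝ) :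
    ψ (a + q • (a - b)) = ψ a + q • (ψ a - ψ b) := by
  have key : a + q • (a - b) = AffineMap.lineMap b a (1 + q : ℝ) := by
    rw [AffineMap.lineMap_apply, vsub_eq_sub, vadd_eq_add]; module
  rw [key, show ψ (AffineMap.lineMap b a (1 + q : ℝ)) = ψ.toAffineMap (AffineMap.lineMap b a (1 + q : ℝ)) from rfl,
    AffineMap.apply_lineMap, AffineMap.lineMap_apply, vsub_eq_sub, vadd_eq_add]
  show (1 + q : ℝ) • (ψ.toAffineMap a - ψ.toAffineMap b) + ψ.toAffineMap b = ψ a + q • (ψ a - ψ b)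
  show (1 + q : ℝ) • (ψ a - ψ b) + ψ b = ψ a + q • (ψ a - ψ b)
  module

lemma mem_intrinsicInterior_iff_dense_seq {C : Set E} (hC : Convex ℝ C) (hne : C.Nonempty)
    {D : ℕ → E} (hD : ∀ n, D n ∈ closure C) (hdense : C ⊆ closure (Set.range D)) (x : E) :
    x ∈ intrinsicInterior ℝ C ↔
      x ∈ closure C ∧ ∀ n, ∃ q : ℚ, 0 < q ∧ x + (q : ℝ) • (x - D n) ∈ closure C := by
  obtain ⟨ψ, C₀, hconv₀, hint_ne, himg, hri, hclim, hic⟩ := ri_setup hC hne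
  constructor
  · intro hx
    rw [← hri] at hx
    obtain ⟨x₀, hx₀, rfl⟩ := hx
    have hxcl : ψ x₀ ∈ closure C := by
      rw [← hclim]; exact ⟨x₀, subset_closure (interior_subset hx₀), rfl⟩
    refine ⟨hxcl, fun n => ?_⟩
    have hDn : D n ∈ ψ '' closure C₀ := by rw [hclim]; exact hD n
    obtain ⟨b, hbcl, hbD⟩ := hDn
    by_cases hxb : x₀ = b
    · refine ⟨1, one_pos, ?_⟩
      have : D n = ψ x₀ := by rw [← hbD, hxb]
      rw [this]
      simpa using hxcl
    · obtain ⟨ε, hε, hball⟩ := Metric.isOpen_iff.1 isOpen_interior x₀ hx₀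
      have hd : 0 < dist x₀ b := dist_pos.2 hxb
      obtain ⟨q, hq0, hqlt⟩ := exists_rat_btwn (show (0:ℝ) < ε / dist x₀ b by positivity)
      refine ⟨q, by exact_mod_cast hq0, ?_⟩
      have hz : x₀ + (q:ℝ) • (x₀ - b) ∈ interior C₀ := by
        apply hball
        rw [Metric.mem_ball, dist_comm, dist_self_add_right, norm_smul, Real.norm_eq_abs,
          abs_of_pos hq0, ← dist_eq_norm]
        exact (lt_div_iff₀ hd).1 hqlt
      have : ψ (x₀ + (q:ℝ) • (x₀ - b)) ∈ closure C := by
        rw [← hclim]; exact ⟨_, subset_closure (interior_subset hz), rfl⟩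
      rwa [affine_key, hbD] at this
  · rintro ⟨hx, hext⟩
    rw [← hclim] at hx
    obtain ⟨x₀, hx₀cl, rfl⟩ := hx
    rw [← hri]
    refine ⟨x₀, ?_, rfl⟩
    by_contra hx₀
    have hx₀' : x₀ ∉ interior (closure C₀) := by rw [hic]; exact hx₀
    obtain ⟨f, u, hfu, hux'⟩ := geometric_hahn_banach_open
      ((hconv₀.closure).interior) isOpen_interior (convex_singleton x₀)
      (Set.disjoint_singleton_right.2 hx₀')
    have hux : u ≤ f x₀ := hux' x₀ rfl
    obtain ⟨a, ha⟩ := hint_ne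
    have hfa : f a < u := hfu a (by rw [hic]; exact ha)
    have hle : ∀ b ∈ closure C₀, f b ≤ u := by
      intro b hb
      have key2 : ∀ t : ℝ, 0 ≤ t → t < 1 → f ((1-t) • a + t • b) < u := by
        intro t ht0 ht1
        refine hfu _ ?_
        rw [hic]
        exact hconv₀.combo_interior_closure_mem_interior ha hb (by linarith) ht0 (by ring)
      have hc : Continuous fun t : ℝ => f ((1-t) • a + t • b) := by continuity
      have hlim : Tendsto (fun t : ℝ => f ((1-t) • a + t • b)) (nhdsWithin 1 (Set.Iio 1))
          (nhds (f b)) := by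
        have h := (hc.tendsto 1).mono_left (nhdsWithin_le_nhds (s := Set.Iio 1))
        simpa using h
      refine le_of_tendsto hlim ?_
      filter_upwards [Ioo_mem_nhdsLT_of_mem (show (1:ℝ) ∈ Set.Ioc 0 1 by constructor <;> norm_num)]
        with t ht
      exact (key2 t ht.1.le ht.2).le
    have hfx : ∀ b ∈ closure C₀, f b ≤ f x₀ := fun b hb => (hle b hb).trans hux
    have hnhds : {v | f v < u} ∈ nhds a := (isOpen_lt f.continuous continuous_const).mem_nhds hfa
    obtain ⟨δ, hδ, hballδ⟩ := Metric.mem_nhds_iff.1 hnhds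
    have haC : ψ a ∈ C := by
      have := mem_image_of_mem ψ (interior_subset ha)
      rwa [himg] at this
    obtain ⟨z, hzr, hzd⟩ := Metric.mem_closure_iff.1 (hdense haC) δ hδ
    obtain ⟨n, rfl⟩ := hzr
    obtain ⟨b, hbcl, hbD⟩ := (show D n ∈ ψ '' closure C₀ by rw [hclim]; exact hD n)
    have hbd : dist b a < δ := by
      rw [← ψ.dist_map b a, hbD, dist_comm]
      exact hzd
    have hfb : f b < u := hballδ (Metric.mem_ball.2 hbd)
    obtain ⟨q, hq, hmem⟩ := hext n
    have hq' : (0:ℝ) < (q:ℝ) := by exact_mod_cast hq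
    have h2 : ψ (x₀ + (q:ℝ) • (x₀ - b)) ∈ ψ '' closure C₀ := by
      rw [affine_key, hbD, hclim]; exact hmem
    obtain ⟨w, hw, hww⟩ := h2
    have h3 : x₀ + (q:ℝ) • (x₀ - b) ∈ closure C₀ := by rwa [← ψ.injective hww]
    have h4 : f (x₀ + (q:ℝ) • (x₀ - b)) ≤ f x₀ := hfx _ h3
    have h5 : f (x₀ + (q:ℝ) • (x₀ - b)) = f x₀ + (q:ℝ) * (f x₀ - f b) := by
      simp [smul_eq_mul]
    rw [h5] at h4
    nlinarith

end PartB


lemma hasSum_mem_of_closed {W : Type*} [NormedAddCommGroup W] [NormedSpace ℝ W]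
    {s : Set W} (hs : Convex ℝ s) (hcl : IsClosed s) {b : ℕ → W} (hb : ∀ n, b n ∈ s)
    {l : ℕ → ℝ} (hl : ∀ n, 0 ≤ l n) (hl1 : HasSum l 1) {y : W}
    (hy : HasSum (fun n => l n • b n) y) : y ∈ s := by
  have hσ : Tendsto (fun N => ∑ n ∈ Finset.range N, l n) atTop (nhds 1) := hl1.tendsto_sum_nat
  have hS : Tendsto (fun N => ∑ n ∈ Finset.range N, l n • b n) atTop (nhds y) := hy.tendsto_sum_nat
  have hcomb : Tendsto (fun N => (∑ n ∈ Finset.range N, l n)⁻¹ •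
      ∑ n ∈ Finset.range N, l n • b n) atTop (nhds y) := by
    have := (hσ.inv₀ one_ne_zero).smul hS
    simpa using this
  refine hcl.mem_of_tendsto hcomb ?_
  have hev : ∀ᶠ N in atTop, (1:ℝ)/2 < ∑ n ∈ Finset.range N, l n :=
    hσ.eventually (eventually_gt_nhds (by norm_num))
  filter_upwards [hev] with N hN
  have hσpos : 0 < ∑ n ∈ Finset.range N, l n := by linarith
  rw [Finset.smul_sum]
  have heq : ∀ n, (∑ k ∈ Finset.range N, l k)⁻¹ • (l n • b n) =
      ((∑ k ∈ Finset.range N, l k)⁻¹ * l n) • b n := fun n => by rw [smul_smul]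
  simp_rw [heq]
  refine hs.sum_mem (fun i _ => mul_nonneg (inv_nonneg.2 hσpos.le) (hl i)) ?_ (fun i _ => hb i)
  rw [← Finset.mul_sum, inv_mul_cancel₀ hσpos.ne']

lemma tsum_mem_intrinsicInterior {E : Type*} [NormedAddCommGroup E] [NormedSpace ℝ E]
    [FiniteDimensional ℝ E] {C : Set E} (hC : Convex ℝ C) (hne : C.Nonempty)
    {D : ℕ → E} (hD : ∀ n, D n ∈ closure C) (hdense : C ⊆ closure (Set.range D))
    {l : ℕ → ℝ} (hl : ∀ n, 0 < l n) (hl1 : HasSum l 1)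
    (hsum : Summable (fun n => l n * ‖D n‖)) {y : E}
    (hy : HasSum (fun n => l n • D n) y) : y ∈ intrinsicInterior ℝ C := by
  obtain ⟨ψ, C₀, hconv₀, hint_ne, himg, hri, hclim, hic⟩ := ri_setup hC hne
  have hDn : ∀ n, D n ∈ ψ '' closure C₀ := fun n => by rw [hclim]; exact hD n
  choose b hbcl hbD using hDn
  have hdec : ∀ v, ψ v = ψ.linearIsometry v + ψ 0 := by
    intro v
    have := ψ.map_vadd 0 v
    simpa [vadd_eq_add] using this
  have hLb : ∀ n, ψ.linearIsometry (b n) = D n - ψ 0 := by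
    intro n
    have h := hdec (b n)
    rw [hbD n] at h
    rw [eq_sub_iff_add_eq]
    exact h.symm
  -- summability of l n • b n
  have hbnorm : ∀ n, ‖b n‖ ≤ ‖D n‖ + (‖D 0‖ + ‖b 0‖ + ‖b 0‖) := by
    intro n
    have h1 : ‖b n - b 0‖ = ‖D n - D 0‖ := by
      have h2 := ψ.linearIsometry.norm_map (b n -ᵥ b 0)
      rw [ψ.map_vsub, vsub_eq_sub, vsub_eq_sub, hbD, hbD] at h2
      exact h2.symm
    calc ‖b n‖ = ‖(b n - b 0) + b 0‖ := by congr 1; abel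
      _ ≤ ‖b n - b 0‖ + ‖b 0‖ := norm_add_le _ _
      _ = ‖D n - D 0‖ + ‖b 0‖ := by rw [h1]
      _ ≤ (‖D n‖ + ‖D 0‖) + ‖b 0‖ := by gcongr; exact norm_sub_le _ _
      _ ≤ ‖D n‖ + (‖D 0‖ + ‖b 0‖ + ‖b 0‖) := by linarith [norm_nonneg (b 0)]
  have hsb : Summable (fun n => l n • b n) := by
    refine Summable.of_norm ?_
    have hmaj : ∀ n, ‖l n • b n‖ ≤ l n * ‖D n‖ + l n * (‖D 0‖ + ‖b 0‖ + ‖b 0‖) := by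
      intro n
      rw [norm_smul, Real.norm_eq_abs, abs_of_pos (hl n), ← mul_add]
      exact mul_le_mul_of_nonneg_left (hbnorm n) (hl n).le
    exact Summable.of_nonneg_of_le (fun n => norm_nonneg _) hmaj
      (hsum.add (hl1.summable.mul_right _))
  obtain ⟨y₀, hy₀⟩ := hsb
  -- ψ y₀ = y
  have hψy : ψ y₀ = y := by
    have h1 : Tendsto (fun N => ∑ n ∈ Finset.range N, l n • b n) atTop (nhds y₀) :=
      hy₀.tendsto_sum_nat
    have h2 : Tendsto (fun N => ψ (∑ n ∈ Finset.range N, l n • b n)) atTop (nhds (ψ y₀)) :=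
      (ψ.continuous.tendsto _).comp h1
    have h3 : ∀ N, ψ (∑ n ∈ Finset.range N, l n • b n) =
        (∑ n ∈ Finset.range N, l n • D n) - (∑ n ∈ Finset.range N, l n) • ψ 0 + ψ 0 := by
      intro N
      calc ψ (∑ n ∈ Finset.range N, l n • b n)
          = ψ.linearIsometry (∑ n ∈ Finset.range N, l n • b n) + ψ 0 := hdec _
        _ = (∑ n ∈ Finset.range N, l n • ψ.linearIsometry (b n)) + ψ 0 := by
            rw [map_sum]
            simp_rw [_root_.map_smul]
        _ = (∑ n ∈ Finset.range N, l n • (D n - ψ 0)) + ψ 0 := by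
            congr 1
            exact Finset.sum_congr rfl fun n _ => by rw [hLb n]
        _ = (∑ n ∈ Finset.range N, l n • D n) - (∑ n ∈ Finset.range N, l n) • ψ 0 + ψ 0 := by
            congr 1
            simp_rw [smul_sub]
            rw [Finset.sum_sub_distrib, ← Finset.sum_smul]
    simp only [h3] at h2
    have h4 : Tendsto (fun N => (∑ n ∈ Finset.range N, l n • D n) -
        (∑ n ∈ Finset.range N, l n) • ψ 0 + ψ 0) atTop (nhds (y - (1:ℝ) • ψ 0 + ψ 0)) :=
      (hy.tendsto_sum_nat.sub (hl1.tendsto_sum_nat.smul_const _)).add tendsto_const_nhds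
    have h5 : y - (1:ℝ) • ψ 0 + ψ 0 = y := by simp
    rw [h5] at h4
    exact tendsto_nhds_unique h2 h4
  -- find m with b m ∈ interior C₀
  obtain ⟨a, ha⟩ := hint_ne
  have haC : ψ a ∈ C := by
    have := Set.mem_image_of_mem ψ (interior_subset ha)
    rwa [himg] at this
  obtain ⟨ε, hε, hball⟩ := Metric.isOpen_iff.1 isOpen_interior a ha
  obtain ⟨z', hz'r, hz'd⟩ := Metric.mem_closure_iff.1 (hdense haC) ε hε
  obtain ⟨m, rfl⟩ := hz'r
  have hbm : b m ∈ interior C₀ := by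
    apply hball
    rw [Metric.mem_ball, ← ψ.dist_map (b m) a, hbD, dist_comm]
    exact hz'd
  -- l m < 1
  have hlm1 : l m < 1 := by
    have hs2 := sum_le_hasSum {m, m + 1} (fun i _ => (hl i).le) hl1
    rw [Finset.sum_pair (by omega)] at hs2
    linarith [hl (m + 1)]
  have h1m : (0:ℝ) < 1 - l m := by linarith
  -- tail point z
  set z : ((affineSpan ℝ C).direction) := (1 - l m)⁻¹ • (y₀ - l m • b m) with hzdef
  set w : ℕ → ℝ := fun n => if n = m then 0 else (1 - l m)⁻¹ * l n with hwdef
  have hw1 : HasSum w 1 := by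
    have hupd : HasSum (Function.update l m 0) (0 - l m + 1) := hl1.update m 0
    have hupd' : HasSum (fun n => if n = m then 0 else l n) (1 - l m) := by
      have : (Function.update l m 0) = fun n => if n = m then 0 else l n := by
        funext n
        rw [Function.update_apply]
      rw [this] at hupd
      convert hupd using 1
      ring
    have := hupd'.mul_left (1 - l m)⁻¹
    rw [inv_mul_cancel₀ h1m.ne'] at this
    have hfun : w = fun i => (1 - l m)⁻¹ * if i = m then 0 else l i := by
      funext n
      simp only [hwdef, mul_ite, mul_zero]
    rw [hfun]; exact this
  have hwz : HasSum (fun n => w n • b n) z := by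
    have hupd : HasSum (Function.update (fun n => l n • b n) m 0) (0 - l m • b m + y₀) :=
      hy₀.update m 0
    have heq2 : (Function.update (fun n => l n • b n) m 0) =
        fun n => if n = m then 0 else l n • b n := by
      funext n
      rw [Function.update_apply]
    rw [heq2] at hupd
    have := hupd.const_smul ((1 - l m)⁻¹)
    convert this using 1
    · funext n
      by_cases hnm : n = m
      · simp [hwdef, hnm]
      · simp [hwdef, hnm, smul_smul]
    · rw [hzdef]
      congr 1
      abel
  have hzcl : z ∈ closure C₀ := by
    refine hasSum_mem_of_closed hconv₀.closure isClosed_closure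
      (fun n => hbcl n) (l := w) ?_ hw1 hwz
    intro n
    by_cases hnm : n = m
    · simp [hwdef, hnm]
    · simp only [hwdef, hnm, if_false]
      exact mul_nonneg (inv_nonneg.2 h1m.le) (hl n).le
  have heqy : y₀ = l m • b m + (1 - l m) • z := by
    rw [hzdef, smul_inv_smul₀ h1m.ne']
    abel
  have hy₀int : y₀ ∈ interior C₀ := by
    rw [heqy]
    exact hconv₀.combo_interior_closure_mem_interior hbm hzcl (hl m) (by linarith) (by ring)
  rw [← hri]
  exact ⟨y₀, hy₀int, hψy⟩


section PartE
variable {Ω : Type*} [MeasurableSpace Ω] {d : ℕ}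

local notation "E" => EuclideanSpace ℝ (Fin d)

noncomputable def pseq (d : ℕ) : ℕ → EuclideanSpace ℝ (Fin d) := TopologicalSpace.denseSeq _

lemma pseq_dense (d : ℕ) : DenseRange (pseq d) := TopologicalSpace.denseRange_denseSeq _

lemma exists_closure_selector (G : Ω → Set (EuclideanSpace ℝ (Fin d)))
    (hne : ∀ ω, (G ω).Nonempty)
    (hmeas : ∀ V : Set (EuclideanSpace ℝ (Fin d)), IsOpen V →
      MeasurableSet {ω | (G ω ∩ V).Nonempty}) :
    ∃ f : Ω → EuclideanSpace ℝ (Fin d), Measurable f ∧ ∀ ω, f ω ∈ closure (G ω) := by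
  set p : ℕ → E := pseq d with hp
  have hpd : DenseRange p := pseq_dense d
  set r : ℕ → ℝ := fun m => (1/2 : ℝ)^m with hrdef
  have hr : ∀ m, 0 < r m := fun m => by positivity
  -- the recursive approximation
  let u : ℕ → Ω → ℕ := fun m => m.rec
    (fun ω => if h : ∃ k, (G ω ∩ Metric.ball (p k) (r 0)).Nonempty then Nat.find h else 0)
    (fun m um ω => if h : ∃ k, (G ω ∩ Metric.ball (p k) (r (m+1))).Nonempty ∧
        dist (p k) (p (um ω)) < r m then Nat.find h else 0)
  have hex0 : ∀ ω, ∃ k, (G ω ∩ Metric.ball (p k) (r 0)).Nonempty := by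
    intro ω
    obtain ⟨x, hx⟩ := hne ω
    obtain ⟨k, hk⟩ := hpd.exists_dist_lt x (hr 0)
    exact ⟨k, ⟨x, hx, Metric.mem_ball.2 hk⟩⟩
  have hu0 : ∀ ω, u 0 ω = Nat.find (hex0 ω) := fun ω => dif_pos (hex0 ω)
  -- step existence from invariant
  have hexS : ∀ m ω, (G ω ∩ Metric.ball (p (u m ω)) (r m)).Nonempty →
      ∃ k, (G ω ∩ Metric.ball (p k) (r (m+1))).Nonempty ∧
        dist (p k) (p (u m ω)) < r m := by
    intro m ω hm
    obtain ⟨x, hxG, hxb⟩ := hm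
    rw [Metric.mem_ball] at hxb
    have hδ : 0 < min (r (m+1)) (r m - dist x (p (u m ω))) :=
      lt_min (hr (m+1)) (by linarith)
    obtain ⟨k, hk⟩ := hpd.exists_dist_lt x hδ
    refine ⟨k, ⟨x, hxG, Metric.mem_ball.2 (lt_of_lt_of_le hk (min_le_left _ _))⟩, ?_⟩
    have hk' : dist (p k) x < min (r (m+1)) (r m - dist x (p (u m ω))) := by
      rwa [dist_comm] at hk
    calc dist (p k) (p (u m ω)) ≤ dist (p k) x + dist x (p (u m ω)) := dist_triangle _ _ _
      _ < min (r (m+1)) (r m - dist x (p (u m ω))) + dist x (p (u m ω)) := by linarith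
      _ ≤ (r m - dist x (p (u m ω))) + dist x (p (u m ω)) :=
          add_le_add (min_le_right _ _) le_rfl
      _ = r m := by ring
  -- invariant
  have hinv : ∀ m ω, (G ω ∩ Metric.ball (p (u m ω)) (r m)).Nonempty := by
    intro m
    induction m with
    | zero =>
      intro ω
      rw [hu0 ω]
      exact Nat.find_spec (hex0 ω)
    | succ m ih =>
      intro ω
      have hex := hexS m ω (ih ω)
      have hstep : u (m+1) ω = Nat.find hex := dif_pos hex
      rw [hstep]
      exact (Nat.find_spec hex).1
  have hueq : ∀ m ω, u (m+1) ω = Nat.find (hexS m ω (hinv m ω)) :=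
    fun m ω => dif_pos _
  have hdist : ∀ m ω, dist (p (u (m+1) ω)) (p (u m ω)) < r m := by
    intro m ω
    rw [hueq m ω]
    exact (Nat.find_spec (hexS m ω (hinv m ω))).2
  -- measurability
  have humeas : ∀ m, Measurable (u m) := by
    intro m
    induction m with
    | zero =>
      have hm := measurable_find (p := fun ω k => (G ω ∩ Metric.ball (p k) (r 0)).Nonempty)
        hex0 (fun k => hmeas _ Metric.isOpen_ball)
      rw [show u 0 = (fun ω => Nat.find (hex0 ω)) from funext hu0]
      exact hm
    | succ m ih =>
      have hm := measurable_find
        (p := fun ω k => (G ω ∩ Metric.ball (p k) (r (m+1))).Nonempty ∧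
          dist (p k) (p (u m ω)) < r m)
        (fun ω => hexS m ω (hinv m ω))
        (fun k => by
          refine (hmeas _ Metric.isOpen_ball).inter ?_
          exact ih ((Set.to_countable {j | dist (p k) (p j) < r m}).measurableSet))
      rw [show u (m+1) = (fun ω => Nat.find (hexS m ω (hinv m ω))) from funext (hueq m)]
      exact hm
  set g : ℕ → Ω → E := fun m ω => p (u m ω) with hgdef
  have hgmeas : ∀ m, Measurable (g m) := fun m => measurable_from_top.comp (humeas m)
  -- Cauchy
  have hcauchy : ∀ ω, CauchySeq (fun m => g m ω) := by
    intro ω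
    refine cauchySeq_of_le_geometric (1/2 : ℝ) 1 (by norm_num) (fun m => ?_)
    rw [dist_comm, one_mul]
    exact (hdist m ω).le
  have hlim : ∀ ω, ∃ x, Tendsto (fun m => g m ω) atTop (nhds x) :=
    fun ω => cauchySeq_tendsto_of_complete (hcauchy ω)
  choose f hf using hlim
  refine ⟨f, ?_, ?_⟩
  · exact measurable_of_tendsto_metrizable hgmeas (tendsto_pi_nhds.2 hf)
  · intro ω
    rw [Metric.mem_closure_iff]
    intro ε hε
    obtain ⟨m₁, hm₁⟩ := (Metric.tendsto_atTop.1 (hf ω)) (ε/4) (by linarith)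
    obtain ⟨m₂, hm₂⟩ := exists_pow_lt_of_lt_one (show (0:ℝ) < ε/4 by linarith)
      (show (1/2 : ℝ) < 1 by norm_num)
    set m := max m₁ m₂ with hm
    have hrm : r m < ε/4 := by
      calc r m = (1/2:ℝ)^m := rfl
        _ ≤ (1/2:ℝ)^m₂ := by
            apply pow_le_pow_of_le_one (by norm_num) (by norm_num)
            exact le_max_right _ _
        _ < ε/4 := hm₂
    obtain ⟨x, hxG, hxb⟩ := hinv m ω
    rw [Metric.mem_ball] at hxb
    refine ⟨x, hxG, ?_⟩
    have h1 : dist (g m ω) (f ω) < ε/4 := hm₁ m (le_max_left _ _)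
    calc dist (f ω) x ≤ dist (f ω) (g m ω) + dist (g m ω) x := dist_triangle _ _ _
      _ = dist (g m ω) (f ω) + dist x (g m ω) := by rw [dist_comm (f ω), dist_comm (g m ω) x]
      _ < ε/4 + ε/4 := by
          have : dist x (g m ω) < r m := hxb
          linarith
      _ < ε := by linarith
end PartE

section PartF
variable {Ω : Type*} [MeasurableSpace Ω] {d : ℕ}

lemma exists_castaing (F : Ω → Set (EuclideanSpace ℝ (Fin d)))
    (hne : ∀ ω, (F ω).Nonempty)
    (hmeas : ∀ V : Set (EuclideanSpace ℝ (Fin d)), IsOpen V →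
      MeasurableSet {ω | (F ω ∩ V).Nonempty}) :
    ∃ D : ℕ → Ω → EuclideanSpace ℝ (Fin d), (∀ n, Measurable (D n)) ∧
      (∀ n ω, D n ω ∈ closure (F ω)) ∧
      ∀ ω, F ω ⊆ closure (Set.range fun n => D n ω) := by
  set p : ℕ → EuclideanSpace ℝ (Fin d) := pseq d with hpdef
  have hpd : DenseRange p := pseq_dense d
  set r : ℕ → ℝ := fun m => (1/2 : ℝ)^m with hrdef
  have hr : ∀ m, 0 < r m := fun m => by positivity
  set G : ℕ × ℕ → Ω → Set (EuclideanSpace ℝ (Fin d)) := fun kj ω =>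
    if (F ω ∩ Metric.ball (p kj.1) (r kj.2)).Nonempty
      then F ω ∩ Metric.ball (p kj.1) (r kj.2) else F ω with hGdef
  have hGsub : ∀ kj ω, G kj ω ⊆ F ω := by
    intro kj ω
    by_cases h : (F ω ∩ Metric.ball (p kj.1) (r kj.2)).Nonempty
    · rw [hGdef]; simp only [if_pos h]; exact Set.inter_subset_left
    · rw [hGdef]; simp only [if_neg h]; exact subset_rfl
  have hGne : ∀ kj ω, (G kj ω).Nonempty := by
    intro kj ω
    by_cases h : (F ω ∩ Metric.ball (p kj.1) (r kj.2)).Nonempty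
    · rw [hGdef]; simp only [if_pos h]; exact h
    · rw [hGdef]; simp only [if_neg h]; exact hne ω
  have hGmeas : ∀ kj (V : Set (EuclideanSpace ℝ (Fin d))), IsOpen V →
      MeasurableSet {ω | (G kj ω ∩ V).Nonempty} := by
    intro kj V hV
    have heq : {ω | (G kj ω ∩ V).Nonempty} =
        ({ω | (F ω ∩ Metric.ball (p kj.1) (r kj.2)).Nonempty} ∩
          {ω | (F ω ∩ (Metric.ball (p kj.1) (r kj.2) ∩ V)).Nonempty}) ∪
        ({ω | (F ω ∩ Metric.ball (p kj.1) (r kj.2)).Nonempty}ᶜ ∩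
          {ω | (F ω ∩ V).Nonempty}) := by
      ext ω
      by_cases h : (F ω ∩ Metric.ball (p kj.1) (r kj.2)).Nonempty
      · simp [hGdef, h, Set.inter_assoc]
      · simp [hGdef, h]
    rw [heq]
    exact ((hmeas _ Metric.isOpen_ball).inter (hmeas _ (Metric.isOpen_ball.inter hV))).union
      (((hmeas _ Metric.isOpen_ball).compl).inter (hmeas _ hV))
  choose f hfm hfc using fun kj => exists_closure_selector (G kj) (hGne kj) (hGmeas kj)
  refine ⟨fun n => f (Nat.unpair n), fun n => hfm _, fun n ω => ?_, ?_⟩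
  · exact closure_mono (hGsub _ ω) (hfc _ ω)
  · intro ω x hx
    rw [Metric.mem_closure_iff]
    intro ε hε
    obtain ⟨j, hj⟩ := exists_pow_lt_of_lt_one (show (0:ℝ) < ε/3 by linarith)
      (show (1/2 : ℝ) < 1 by norm_num)
    obtain ⟨k, hk⟩ := hpd.exists_dist_lt x (hr j)
    have hball : (F ω ∩ Metric.ball (p k) (r j)).Nonempty := ⟨x, hx, Metric.mem_ball.2 hk⟩
    have hGeq : G (k, j) ω = F ω ∩ Metric.ball (p k) (r j) := by
      rw [hGdef]; simp only [if_pos hball]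
    have h1 : f (k, j) ω ∈ closure (Metric.ball (p k) (r j)) :=
      closure_mono (by rw [hGeq]; exact Set.inter_subset_right) (hfc (k, j) ω)
    have h2 : dist (f (k, j) ω) (p k) ≤ r j :=
      Metric.mem_closedBall.1 (Metric.closure_ball_subset_closedBall h1)
    refine ⟨f (Nat.unpair (Nat.pair k j)) ω, ⟨Nat.pair k j, rfl⟩, ?_⟩
    rw [Nat.unpair_pair]
    have hrj : r j < ε/3 := hj
    calc dist x (f (k, j) ω) ≤ dist x (p k) + dist (p k) (f (k, j) ω) := dist_triangle _ _ _
      _ = dist x (p k) + dist (f (k, j) ω) (p k) := by rw [dist_comm (p k)]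
      _ < ε/3 + ε/3 := by linarith [hk, h2]
      _ < ε := by linarith
end PartF


/-- If `F` is measurable with nonempty convex values and measurable graph, then
the relative-interior map `ω ↦ ri (F ω)` has measurable graph and admits a
measurable selector. -/
theorem ri_graph_measurable_and_selector
    {Ω : Type*} {ℋ : MeasurableSpace Ω} {μ : Measure Ω} [IsProbabilityMeasure μ]
    [μ.IsComplete] {d : ℕ}
    (F : Ω → Set (EuclideanSpace ℝ (Fin d)))
    (hne : ∀ ω, (F ω).Nonempty) (hconv : ∀ ω, Convex ℝ (F ω))
    (hmeas : ∀ V : Set (EuclideanSpace ℝ (Fin d)), IsOpen V →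
      MeasurableSet {ω | (F ω ∩ V).Nonempty})
    (hgr : MeasurableSet {p : Ω × EuclideanSpace ℝ (Fin d) | p.2 ∈ F p.1}) :
    MeasurableSet {p : Ω × EuclideanSpace ℝ (Fin d) |
        p.2 ∈ intrinsicInterior ℝ (F p.1)} ∧
      ∃ f : Ω → EuclideanSpace ℝ (Fin d),
        Measurable f ∧ ∀ ω, f ω ∈ intrinsicInterior ℝ (F ω) := by
  obtain ⟨D, hDm, hDcl, hDdense⟩ := exists_castaing F hne hmeas
  -- measurability of the closure graph
  have hA : MeasurableSet {q : Ω × EuclideanSpace ℝ (Fin d) | q.2 ∈ closure (F q.1)} := by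
    have heq : {q : Ω × EuclideanSpace ℝ (Fin d) | q.2 ∈ closure (F q.1)} =
        ⋂ (m : ℕ), ⋃ (n : ℕ),
          {q : Ω × EuclideanSpace ℝ (Fin d) | dist q.2 (D n q.1) < (1/2:ℝ)^m} := by
      ext q
      simp only [Set.mem_iInter, Set.mem_iUnion, Set.mem_setOf_eq]
      constructor
      · intro hq m
        have hsub : closure (F q.1) ⊆ closure (Set.range fun n => D n q.1) :=
          closure_minimal (hDdense q.1) isClosed_closure
        obtain ⟨z, ⟨n, rfl⟩, hzd⟩ := Metric.mem_closure_iff.1 (hsub hq) ((1/2:ℝ)^m)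
          (by positivity)
        exact ⟨n, hzd⟩
      · intro hq
        have h1 : q.2 ∈ closure (Set.range fun n => D n q.1) := by
          rw [Metric.mem_closure_iff]
          intro ε hε
          obtain ⟨m, hm⟩ := exists_pow_lt_of_lt_one hε (show (1/2:ℝ) < 1 by norm_num)
          obtain ⟨n, hn⟩ := hq m
          exact ⟨D n q.1, ⟨n, rfl⟩, hn.trans hm⟩
        have h2 : closure (Set.range fun n => D n q.1) ⊆ closure (F q.1) := by
          rw [← closure_closure (s := F q.1)]
          exact closure_mono (Set.range_subset_iff.2 fun n => hDcl n q.1)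
        exact h2 h1
    rw [heq]
    refine MeasurableSet.iInter fun m => MeasurableSet.iUnion fun n => ?_
    have hdm : Measurable fun q : Ω × EuclideanSpace ℝ (Fin d) => dist q.2 (D n q.1) :=
      measurable_snd.dist ((hDm n).comp measurable_fst)
    exact measurableSet_lt hdm measurable_const
  have hgraph : MeasurableSet {p : Ω × EuclideanSpace ℝ (Fin d) |
      p.2 ∈ intrinsicInterior ℝ (F p.1)} := by
    have heq : {p : Ω × EuclideanSpace ℝ (Fin d) | p.2 ∈ intrinsicInterior ℝ (F p.1)} =
        {p : Ω × EuclideanSpace ℝ (Fin d) | p.2 ∈ closure (F p.1)} ∩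
        ⋂ (n : ℕ), ⋃ (q : {q : ℚ // 0 < q}),
          {p : Ω × EuclideanSpace ℝ (Fin d) |
            p.2 + ((q : ℚ) : ℝ) • (p.2 - D n p.1) ∈ closure (F p.1)} := by
      ext p
      rw [Set.mem_setOf_eq,
        mem_intrinsicInterior_iff_dense_seq (hconv p.1) (hne p.1)
          (fun n => hDcl n p.1) (hDdense p.1)]
      simp only [Set.mem_inter_iff, Set.mem_iInter, Set.mem_iUnion, Set.mem_setOf_eq]
      refine and_congr Iff.rfl (forall_congr' fun n => ?_)
      constructor
      · rintro ⟨q, hq, hmem⟩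
        exact ⟨⟨q, hq⟩, hmem⟩
      · rintro ⟨⟨q, hq⟩, hmem⟩
        exact ⟨q, hq, hmem⟩
    rw [heq]
    refine hA.inter (MeasurableSet.iInter fun n => MeasurableSet.iUnion fun q => ?_)
    have hφ : Measurable fun p : Ω × EuclideanSpace ℝ (Fin d) =>
        (p.1, p.2 + ((q : ℚ) : ℝ) • (p.2 - D n p.1)) := by
      refine measurable_fst.prodMk ?_
      exact measurable_snd.add ((measurable_snd.sub ((hDm n).comp measurable_fst)).const_smul ((q : ℚ) : ℝ))
    exact hφ hA
  refine ⟨hgraph, ?_⟩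
  -- the selector
  set w : ℕ → Ω → ℝ := fun n ω => (1/2:ℝ)^(n+1) * (1 + ‖D n ω‖)⁻¹ with hwdef
  have hDnorm_pos : ∀ n ω, (0:ℝ) < 1 + ‖D n ω‖ := fun n ω => by positivity
  have hwpos : ∀ n ω, 0 < w n ω := fun n ω => by
    rw [hwdef]; positivity
  have hwle : ∀ n ω, w n ω ≤ (1/2:ℝ)^(n+1) := by
    intro n ω
    rw [hwdef]
    calc (1/2:ℝ)^(n+1) * (1 + ‖D n ω‖)⁻¹ ≤ (1/2:ℝ)^(n+1) * 1 := by
          refine mul_le_mul_of_nonneg_left ?_ (by positivity)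
          rw [inv_le_one_iff₀]
          right
          linarith [norm_nonneg (D n ω)]
      _ = (1/2:ℝ)^(n+1) := mul_one _
  have hwsum : ∀ ω, Summable fun n => w n ω := by
    intro ω
    have hg : Summable fun n : ℕ => (1/2:ℝ)^(n+1) := by
      have h := (summable_geometric_of_lt_one (show (0:ℝ) ≤ 1/2 by norm_num)
        (by norm_num)).mul_left (1/2 : ℝ)
      refine h.congr fun n => ?_
      rw [pow_succ]; ring
    exact Summable.of_nonneg_of_le (fun n => (hwpos n ω).le) (fun n => hwle n ω) hg
  set W : Ω → ℝ := fun ω => ∑' n, w n ω with hWdef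
  have hWpos : ∀ ω, 0 < W ω := by
    intro ω
    have := (hwpos 0 ω).trans_le (Summable.le_tsum (hwsum ω) 0 (fun i _ => (hwpos i ω).le))
    exact this
  set l : ℕ → Ω → ℝ := fun n ω => (W ω)⁻¹ * w n ω with hldef
  have hlpos : ∀ n ω, 0 < l n ω := fun n ω => by
    rw [hldef]
    exact mul_pos (inv_pos.2 (hWpos ω)) (hwpos n ω)
  have hl1 : ∀ ω, HasSum (fun n => l n ω) 1 := by
    intro ω
    have := (hwsum ω).hasSum.mul_left (W ω)⁻¹
    rwa [inv_mul_cancel₀ (hWpos ω).ne'] at this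
  have hlsum : ∀ ω, Summable fun n => l n ω * ‖D n ω‖ := by
    intro ω
    refine Summable.of_nonneg_of_le (fun n => mul_nonneg (hlpos n ω).le (norm_nonneg _)) (fun n => ?_)
      (((summable_geometric_of_lt_one (show (0:ℝ) ≤ 1/2 by norm_num)
        (by norm_num)).mul_left ((W ω)⁻¹ * (1/2))))
    rw [hldef, hwdef]
    have h1 : ‖D n ω‖ * (1 + ‖D n ω‖)⁻¹ ≤ 1 := by
      rw [mul_inv_le_iff₀ (hDnorm_pos n ω), one_mul]
      linarith
    calc (W ω)⁻¹ * ((1/2:ℝ)^(n+1) * (1 + ‖D n ω‖)⁻¹) * ‖D n ω‖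
        = (W ω)⁻¹ * (1/2:ℝ)^(n+1) * (‖D n ω‖ * (1 + ‖D n ω‖)⁻¹) := by ring
      _ ≤ (W ω)⁻¹ * (1/2:ℝ)^(n+1) * 1 := by
          refine mul_le_mul_of_nonneg_left h1 ?_
          have := (hWpos ω)
          positivity
      _ = (W ω)⁻¹ * (1/2) * (1/2:ℝ)^n := by rw [pow_succ]; ring
  have hlD : ∀ ω, Summable fun n => l n ω • D n ω := by
    intro ω
    refine Summable.of_norm (Summable.of_nonneg_of_le (fun n => norm_nonneg _)
      (fun n => ?_) (hlsum ω))
    rw [norm_smul, Real.norm_eq_abs, abs_of_pos (hlpos n ω)]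
  set y : Ω → EuclideanSpace ℝ (Fin d) := fun ω => ∑' n, l n ω • D n ω with hydef
  have hysel : ∀ ω, y ω ∈ intrinsicInterior ℝ (F ω) := by
    intro ω
    exact tsum_mem_intrinsicInterior (hconv ω) (hne ω) (fun n => hDcl n ω) (hDdense ω)
      (fun n => hlpos n ω) (hl1 ω) (hlsum ω) ((hlD ω).hasSum)
  -- measurability of y
  have hwm : ∀ n, Measurable fun ω => w n ω := by
    intro n
    rw [hwdef]
    exact (measurable_const.mul ((measurable_const.add (hDm n).norm).inv))
  have hWm : Measurable W := by
    have hpart : ∀ N, Measurable fun ω => ∑ n ∈ Finset.range N, w n ω :=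
      fun N => Finset.measurable_sum _ (fun n _ => hwm n)
    refine measurable_of_tendsto_metrizable hpart (tendsto_pi_nhds.2 fun ω => ?_)
    exact (hwsum ω).hasSum.tendsto_sum_nat
  have hlm : ∀ n, Measurable fun ω => l n ω := fun n => (hWm.inv.mul (hwm n))
  have hym : Measurable y := by
    have hpart : ∀ N, Measurable fun ω => ∑ n ∈ Finset.range N, l n ω • D n ω :=
      fun N => Finset.measurable_sum _ (fun n _ => (hlm n).smul (hDm n))
    refine measurable_of_tendsto_metrizable hpart (tendsto_pi_nhds.2 fun ω => ?_)
    exact (hlD ω).hasSum.tendsto_sum_nat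
  exact ⟨y, hym, hysel⟩
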